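/- Let S be a finite set in ℝ^d with empirical covariance bounded: Cov[S] ⪯ σ·I, and suppose a subset G ⊆ S with |G| ≥ (α/2)|S| has mean μ_G. Then ‖μ_G - μ_S‖₂ ≤ √(2σ/α). -/

import Mathlib

open Finset
open scoped RealInnerProductSpace Classical

noncomputable def emean {n : ℕ} (A : Finset (EuclideanSpace ℝ (Fin n))) :
    EuclideanSpace ℝ (Fin n) :=
  (A.card : ℝ)⁻¹ • ∑ x ∈ A, x

/-- If a finite set `S` has empirical covariance `⪯ σ·I` and `G ⊆ S` contains at least
an `α/2`-fraction of `S`, then `‖μ_G - μ_S‖₂ ≤ √(2σ/α)`. -/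
theorem stmt16 (n : ℕ) (σ α : ℝ) (hσ : 0 ≤ σ) (hα : 0 < α) (hα1 : α ≤ 1)
    (S G : Finset (EuclideanSpace ℝ (Fin n))) (hS : S.Nonempty) (hG : G ⊆ S)
    (hGcard : α / 2 * (S.card : ℝ) ≤ (G.card : ℝ))
    (hcov : ∀ v : EuclideanSpace ℝ (Fin n), ‖v‖ = 1 →
      (S.card : ℝ)⁻¹ * ∑ x ∈ S, ⟪v, x - emean S⟫ ^ 2 ≤ σ) :
    ‖emean G - emean S‖ ≤ Real.sqrt (2 * σ / α) := by
  set d := emean G - emean S with hd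
  by_cases hd0 : d = 0
  · rw [hd0, norm_zero]; exact Real.sqrt_nonneg _
  have hdn : (0:ℝ) < ‖d‖ := norm_pos_iff.2 hd0
  have hScard : (0:ℝ) < S.card := by exact_mod_cast Finset.card_pos.2 hS
  have hGpos : (0:ℝ) < G.card := lt_of_lt_of_le (by positivity) hGcard
  set v := ‖d‖⁻¹ • d with hv
  have hvnorm : ‖v‖ = 1 := by
    rw [hv, norm_smul, norm_inv, norm_norm, inv_mul_cancel₀ (ne_of_gt hdn)]
  -- sum over G of inner products
  have hsumG : ∑ x ∈ G, ⟪v, x - emean S⟫ = (G.card : ℝ) * ‖d‖ := by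
    have : ∑ x ∈ G, ⟪v, x - emean S⟫ = ⟪v, (∑ x ∈ G, x) - (G.card : ℝ) • emean S⟫ := by
      rw [inner_sub_right, inner_smul_right, inner_sum]
      rw [Finset.sum_congr rfl (fun x _ => inner_sub_right v x (emean S)),
        Finset.sum_sub_distrib, Finset.sum_const, nsmul_eq_mul]
    rw [this]
    have h1 : (∑ x ∈ G, x) - (G.card : ℝ) • emean S = (G.card : ℝ) • d := by
      rw [hd, smul_sub]
      congr 1
      rw [emean, smul_smul, mul_inv_cancel₀ (ne_of_gt hGpos), one_smul]
    rw [h1, inner_smul_right, hv, inner_smul_left, real_inner_self_eq_norm_sq]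
    field_simp
    simp [conj_trivial, hdn.ne']
  -- Cauchy–Schwarz / Chebyshev
  have hCS : ((G.card : ℝ) * ‖d‖) ^ 2 ≤ (G.card : ℝ) * ∑ x ∈ G, ⟪v, x - emean S⟫ ^ 2 := by
    rw [← hsumG]
    have := sq_sum_le_card_mul_sum_sq (s := G) (f := fun x => ⟪v, x - emean S⟫)
    exact_mod_cast this
  have hGS : ∑ x ∈ G, ⟪v, x - emean S⟫ ^ 2 ≤ ∑ x ∈ S, ⟪v, x - emean S⟫ ^ 2 :=
    Finset.sum_le_sum_of_subset_of_nonneg hG (fun i _ _ => sq_nonneg _)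
  have hsumle : ∑ x ∈ G, ⟪v, x - emean S⟫ ^ 2 ≤ (S.card : ℝ) * σ := by
    have := hcov v hvnorm
    calc ∑ x ∈ G, ⟪v, x - emean S⟫ ^ 2 ≤ ∑ x ∈ S, ⟪v, x - emean S⟫ ^ 2 := hGS
      _ ≤ (S.card : ℝ) * σ := by
          exact (inv_mul_le_iff₀ hScard).1 this
  have key : (G.card : ℝ) * ‖d‖ ^ 2 ≤ (S.card : ℝ) * σ := by
    have h2 : ((G.card : ℝ) * ‖d‖) ^ 2 ≤ (G.card : ℝ) * ((S.card : ℝ) * σ) :=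
      hCS.trans (by nlinarith)
    nlinarith
  have hd2 : ‖d‖ ^ 2 ≤ 2 * σ / α := by
    have h3 : α / 2 * (S.card : ℝ) * ‖d‖ ^ 2 ≤ (S.card : ℝ) * σ := by
      nlinarith [sq_nonneg ‖d‖]
    rw [le_div_iff₀ hα]
    nlinarith
  calc ‖d‖ = Real.sqrt (‖d‖ ^ 2) := by rw [Real.sqrt_sq hdn.le]
    _ ≤ Real.sqrt (2 * σ / α) := Real.sqrt_le_sqrt hd2
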